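/- Let k be a field and let f, g ∈ k[X] with f monic of degree n and deg(g) < n. Then the following are equivalent: (1) res_{n,n}(f,g) is invertible in k; (2) the ideals (f,g) and (f*, g*) both equal k[X], where f* and g* are the reciprocal polynomials taken with formal degree n. -/

import Mathlib

open Polynomial

/-- The Sylvester matrix of `f` and `g` with respect to the formal degrees `n` and `m`:
the `(n+m) × (n+m)` matrix whose first `m` columns contain the shifted coefficient
sequences of `f` (written with formal degree `n`) and whose last `n` columns contain
the shifted coefficient sequences of `g` (written with formal degree `m`). -/
def sylvesterMatrix {R : Type*} [CommRing R] (n m : ℕ) (f g : Polynomial R) :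
    Matrix (Fin (n + m)) (Fin (n + m)) R :=
  Matrix.of fun i j =>
    if (j : ℕ) < m then
      (if (j : ℕ) ≤ (i : ℕ) ∧ (i : ℕ) ≤ (j : ℕ) + n then f.coeff (n + (j : ℕ) - (i : ℕ)) else 0)
    else
      (if (j : ℕ) - m ≤ (i : ℕ) ∧ (i : ℕ) ≤ ((j : ℕ) - m) + m then
        g.coeff (m + ((j : ℕ) - m) - (i : ℕ)) else 0)

/-- The resultant `res_{n,m}(f,g)` of `f` and `g` with respect to the formal degrees
`n` and `m`: the determinant of the corresponding Sylvester matrix. -/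
def res {R : Type*} [CommRing R] (n m : ℕ) (f g : Polynomial R) : R :=
  (sylvesterMatrix n m f g).det

section Aux

variable {k : Type*} [Field k]

lemma span_pair_top_iff (x y : k[X]) : Ideal.span {x, y} = ⊤ ↔ IsCoprime x y := by
  rw [Ideal.eq_top_iff_one, Ideal.mem_span_pair]
  rfl

noncomputable def pol (n : ℕ) (w : Fin n → k) : k[X] :=
  ∑ j : Fin n, C (w j) * X ^ (n - 1 - (j : ℕ))

lemma coeff_pol (n : ℕ) (w : Fin n → k) (t : ℕ) :
    (pol n w).coeff t = if h : t < n then w ⟨n - 1 - t, by omega⟩ else 0 := by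
  simp only [pol, finset_sum_coeff, coeff_C_mul, coeff_X_pow]
  split
  · next h =>
    rw [Finset.sum_eq_single (⟨n - 1 - t, by omega⟩ : Fin n)]
    · simp only [mul_ite, mul_one, mul_zero]
      rw [if_pos (by omega)]
    · intro j _ hj
      rw [if_neg, mul_zero]
      intro hEq
      apply hj
      have hj' : (j : ℕ) < n := j.isLt
      exact Fin.ext (show (j : ℕ) = n - 1 - t by omega)
    · simp
  · next h =>
    apply Finset.sum_eq_zero
    intro j _
    rw [if_neg (by have := j.isLt; omega), mul_zero]

lemma coeff_pol_ge (n : ℕ) (w : Fin n → k) (t : ℕ) (ht : n ≤ t) :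
    (pol n w).coeff t = 0 := by
  rw [coeff_pol, dif_neg (by omega)]

lemma entry_eq (n : ℕ) (p : k[X]) (hp : ∀ t, n < t → p.coeff t = 0)
    (I J : ℕ) (hI : I < 2 * n) (hJ : J < n) (c : k) :
    (if J ≤ I ∧ I ≤ J + n then p.coeff (n + J - I) else 0) * c
      = c * (if n - 1 - J ≤ 2 * n - 1 - I then p.coeff (2 * n - 1 - I - (n - 1 - J)) else 0) := by
  by_cases h1 : I ≤ J + n
  · have h2 : n - 1 - J ≤ 2 * n - 1 - I := by omega
    rw [if_pos h2]
    have hidx : 2 * n - 1 - I - (n - 1 - J) = n + J - I := by omega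
    rw [hidx]
    by_cases h3 : J ≤ I
    · rw [if_pos ⟨h3, h1⟩, mul_comm]
    · rw [if_neg (by tauto), hp (n + J - I) (by omega), mul_zero, zero_mul]
  · rw [if_neg (by omega), if_neg (by omega), mul_zero, zero_mul]

lemma mulVec_eq (n : ℕ) (f g : k[X]) (hf : ∀ t, n < t → f.coeff t = 0)
    (hg : ∀ t, n < t → g.coeff t = 0) (v : Fin (n + n) → k) (i : Fin (n + n)) :
    (sylvesterMatrix n n f g).mulVec v i
      = (pol n (v ∘ Fin.castAdd n) * f + pol n (v ∘ Fin.natAdd n) * g).coeff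
          (2 * n - 1 - (i : ℕ)) := by
  have expand : ∀ (p : k[X]) (w : Fin n → k) (d : ℕ),
      (pol n w * p).coeff d
        = ∑ j : Fin n, w j * (if n - 1 - (j : ℕ) ≤ d then p.coeff (d - (n - 1 - (j:ℕ))) else 0) := by
    intro p w d
    rw [pol, Finset.sum_mul]
    rw [finset_sum_coeff]
    apply Finset.sum_congr rfl
    intro j _
    rw [mul_right_comm, coeff_mul_X_pow']
    split_ifs
    · rw [coeff_C_mul]
    · rw [mul_zero]
  rw [coeff_add, expand f _ _, expand g _ _, Matrix.mulVec, dotProduct,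
    Fin.sum_univ_add]
  congr 1
  · apply Finset.sum_congr rfl
    intro j _
    have hij := i.isLt
    have hjn := j.isLt
    have : (sylvesterMatrix n n f g) i (Fin.castAdd n j)
        = (if (j:ℕ) ≤ (i:ℕ) ∧ (i:ℕ) ≤ (j:ℕ) + n then f.coeff (n + (j:ℕ) - (i:ℕ)) else 0) := by
      simp only [sylvesterMatrix, Matrix.of_apply, Fin.coe_castAdd]
      rw [if_pos hjn]
    rw [this]
    exact entry_eq n f hf (i:ℕ) (j:ℕ) (by omega) hjn (v (Fin.castAdd n j))
  · apply Finset.sum_congr rfl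
    intro j _
    have hij := i.isLt
    have hjn := j.isLt
    have : (sylvesterMatrix n n f g) i (Fin.natAdd n j)
        = (if (j:ℕ) ≤ (i:ℕ) ∧ (i:ℕ) ≤ (j:ℕ) + n then g.coeff (n + (j:ℕ) - (i:ℕ)) else 0) := by
      simp only [sylvesterMatrix, Matrix.of_apply, Fin.coe_natAdd]
      rw [if_neg (by omega)]
      have h1 : (n + (j:ℕ)) - n = (j:ℕ) := by omega
      rw [h1]
    rw [this]
    exact entry_eq n g hg (i:ℕ) (j:ℕ) (by omega) hjn (v (Fin.natAdd n j))

lemma mul_coeff_hi (n : ℕ) (p q : k[X]) (hp : ∀ t, n ≤ t → p.coeff t = 0)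
    (hq : ∀ t, n < t → q.coeff t = 0) (d : ℕ) (hd : 2 * n ≤ d) :
    (p * q).coeff d = 0 := by
  rw [coeff_mul]
  apply Finset.sum_eq_zero
  rintro ⟨x, y⟩ hxy
  rw [Finset.HasAntidiagonal.mem_antidiagonal] at hxy
  by_cases hx : n ≤ x
  · rw [hp x hx, zero_mul]
  · rw [hq y (by omega), mul_zero]

/-- The main equivalence with coprimality. -/
lemma isUnit_res_iff_isCoprime (n : ℕ) (f g : k[X]) (hf : f.Monic) (hfn : f.natDegree = n)
    (hg : g.degree < (n : ℕ)) : IsUnit (res n n f g) ↔ IsCoprime f g := by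
  classical
  have hfne : f ≠ 0 := hf.ne_zero
  have hfc : ∀ t, n < t → f.coeff t = 0 := fun t ht =>
    coeff_eq_zero_of_natDegree_lt (hfn ▸ ht)
  have hgc : ∀ t, n < t → g.coeff t = 0 := fun t ht =>
    coeff_eq_zero_of_degree_lt (hg.trans (by exact_mod_cast Nat.cast_lt.mpr ht))
  have hgc' : ∀ t, n ≤ t → g.coeff t = 0 := fun t ht =>
    coeff_eq_zero_of_degree_lt (lt_of_lt_of_le hg (by exact_mod_cast ht))
  rw [res, isUnit_iff_ne_zero, Ne, ← Matrix.exists_mulVec_eq_zero_iff]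
  constructor
  · -- no kernel vector → coprime
    intro h
    by_contra hnc
    apply h
    set d := EuclideanDomain.gcd f g with hd
    have hdf : d ∣ f := EuclideanDomain.gcd_dvd_left f g
    have hdg : d ∣ g := EuclideanDomain.gcd_dvd_right f g
    have hdu : ¬ IsUnit d := fun hu => hnc (EuclideanDomain.gcd_isUnit_iff.mp hu)
    have hd0 : d ≠ 0 := by
      intro h0
      exact hfne (EuclideanDomain.gcd_eq_zero_iff.mp (hd ▸ h0)).1
    have hddeg : 0 < d.natDegree := by
      rcases Nat.eq_zero_or_pos d.natDegree with h0 | h; swap; · exact h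
      obtain ⟨c, hc⟩ := Polynomial.natDegree_eq_zero.mp h0
      exact absurd (hc ▸ isUnit_C.mpr (isUnit_iff_ne_zero.mpr (by rintro rfl; simp [← hc] at hd0))) hdu
    obtain ⟨f', hf'⟩ := hdf
    obtain ⟨g', hg'⟩ := hdg
    have hf'0 : f' ≠ 0 := by rintro rfl; rw [mul_zero] at hf'; exact hfne hf'
    have hdlen : d.natDegree ≤ n := by
      rw [← hfn]; exact natDegree_le_of_dvd ⟨f', hf'⟩ hfne
    have hf'deg : f'.natDegree < n := by
      have := natDegree_mul hd0 hf'0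
      rw [← hf', hfn] at this
      omega
    have hg'c : ∀ t, n ≤ t → g'.coeff t = 0 := by
      rcases eq_or_ne g' 0 with rfl | hg'0
      · simp
      intro t ht
      apply coeff_eq_zero_of_degree_lt
      have hgne : g ≠ 0 := by rw [hg']; exact mul_ne_zero hd0 hg'0
      have hle : g'.degree ≤ g.degree := degree_le_of_dvd ⟨d, by rw [hg', mul_comm]⟩ hgne
      refine lt_of_le_of_lt hle (lt_of_lt_of_le hg ?_)
      exact_mod_cast ht
    have hf'c : ∀ t, n ≤ t → (-f').coeff t = 0 := fun t ht => by
      rw [coeff_neg, coeff_eq_zero_of_natDegree_lt (by omega), neg_zero]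
    set v : Fin (n + n) → k :=
      Fin.append (fun j : Fin n => g'.coeff (n - 1 - (j : ℕ)))
        (fun j : Fin n => (-f').coeff (n - 1 - (j : ℕ))) with hv
    have hpa : pol n (v ∘ Fin.castAdd n) = g' := by
      ext t
      rw [coeff_pol]
      split
      · next h =>
        simp only [Function.comp_apply, hv, Fin.append_left]
        show g'.coeff (n - 1 - (n - 1 - t)) = g'.coeff t
        congr 1
        omega
      · next h => rw [hg'c t (by omega)]
    have hpb : pol n (v ∘ Fin.natAdd n) = -f' := by
      ext t
      rw [coeff_pol]
      split
      · next h =>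
        simp only [Function.comp_apply, hv, Fin.append_right]
        show (-f').coeff (n - 1 - (n - 1 - t)) = (-f').coeff t
        congr 1
        omega
      · next h => rw [hf'c t (by omega)]
    refine ⟨v, ?_, ?_⟩
    · -- v ≠ 0
      intro hv0
      apply hf'0
      have : pol n (v ∘ Fin.natAdd n) = 0 := by
        rw [hv0]; simp [pol]
      rw [hpb] at this
      simpa [neg_eq_zero] using this
    · funext i
      rw [mulVec_eq n f g hfc hgc, hpa, hpb, Pi.zero_apply]
      have : g' * f + (-f') * g = 0 := by
        rw [hf', hg']; ring
      rw [this, coeff_zero]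
  · -- coprime → no kernel vector
    rintro hc ⟨v, hv0, hv⟩
    set a := pol n (v ∘ Fin.castAdd n) with ha
    set b := pol n (v ∘ Fin.natAdd n) with hb
    have habc : a * f + b * g = 0 := by
      ext t
      rw [coeff_zero]
      by_cases ht : t < 2 * n
      · have := congrFun hv ⟨2 * n - 1 - t, by omega⟩
        rw [mulVec_eq n f g hfc hgc, Pi.zero_apply] at this
        convert this using 2
        simp only []
        omega
      · rw [coeff_add, mul_coeff_hi n a f (fun t ht => coeff_pol_ge n _ t ht) hfc t (by omega),
          mul_coeff_hi n b g (fun t ht => coeff_pol_ge n _ t ht) hgc t (by omega), add_zero]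
    have hfdvd : f ∣ b * g := ⟨-a, by linear_combination habc⟩
    have hfb : f ∣ b := hc.dvd_of_dvd_mul_right hfdvd
    have hb0 : b = 0 := by
      refine eq_zero_of_dvd_of_degree_lt hfb ?_
      calc b.degree < (n : ℕ) := by
            rw [degree_lt_iff_coeff_zero]
            intro m hm
            exact coeff_pol_ge n _ m (by exact_mod_cast hm)
        _ = f.degree := by rw [← hfn, degree_eq_natDegree hfne]
    have ha0 : a = 0 := by
      have : a * f = 0 := by rw [← habc, hb0, zero_mul, add_zero]
      rcases mul_eq_zero.mp this with h | h
      · exact h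
      · exact absurd h hfne
    apply hv0
    funext i
    rw [Pi.zero_apply]
    rcases lt_or_ge (i : ℕ) n with h | h
    · have ht : (pol n (v ∘ Fin.castAdd n)).coeff (n - 1 - (i : ℕ)) = 0 := by
        rw [← ha, ha0, coeff_zero]
      rw [coeff_pol, dif_pos (by omega)] at ht
      simp only [Function.comp_apply] at ht
      have heq : Fin.castAdd n (⟨n - 1 - (n - 1 - (i : ℕ)), by omega⟩ : Fin n) = i :=
        Fin.ext (show n - 1 - (n - 1 - (i : ℕ)) = (i : ℕ) by omega)
      rwa [heq] at ht
    · have hin : (i : ℕ) - n < n := by have := i.isLt; omega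
      have ht : (pol n (v ∘ Fin.natAdd n)).coeff (n - 1 - ((i : ℕ) - n)) = 0 := by
        rw [← hb, hb0, coeff_zero]
      rw [coeff_pol, dif_pos (by omega)] at ht
      simp only [Function.comp_apply] at ht
      have heq : Fin.natAdd n (⟨n - 1 - (n - 1 - ((i : ℕ) - n)), by omega⟩ : Fin n) = i :=
        Fin.ext (show n + (n - 1 - (n - 1 - ((i : ℕ) - n))) = (i : ℕ) by omega)
      rwa [heq] at ht

lemma reflect_reflect (N : ℕ) (p : k[X]) : (p.reflect N).reflect N = p := by
  ext t
  simp [coeff_reflect, revAt_invol]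

lemma natDegree_reflect_le {N : ℕ} {p : k[X]} (h : p.natDegree ≤ N) :
    (p.reflect N).natDegree ≤ N := by
  rw [natDegree_le_iff_coeff_eq_zero]
  intro t ht
  rw [coeff_reflect]
  have : revAt N t = t := by
    rw [← revAtFun_eq]
    unfold revAtFun
    rw [if_neg (by omega)]
  rw [this]
  exact coeff_eq_zero_of_natDegree_lt (by omega)

lemma dvd_reflect (N : ℕ) (d p : k[X]) (hdp : d ∣ p) (hN : p.natDegree ≤ N) :
    d.reflect d.natDegree ∣ p.reflect N := by
  rcases eq_or_ne p 0 with rfl | hp0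
  · simp
  rcases eq_or_ne d 0 with rfl | hd0
  · rw [zero_dvd_iff] at hdp; exact absurd hdp hp0
  obtain ⟨e, rfl⟩ := hdp
  have he0 : e ≠ 0 := by rintro rfl; rw [mul_zero] at hp0; exact hp0 rfl
  have hnd : (d * e).natDegree = d.natDegree + e.natDegree := natDegree_mul hd0 he0
  have hsplit : N = d.natDegree + (N - d.natDegree) := by omega
  rw [hsplit, reflect_mul d e le_rfl (by omega)]
  exact Dvd.intro _ rfl

lemma isCoprime_reflect (n : ℕ) (f g : k[X]) (hf : f.Monic) (hfn : f.natDegree = n)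
    (hg : g.degree < (n : ℕ)) (hc : IsCoprime f g) :
    IsCoprime (f.reflect n) (g.reflect n) := by
  classical
  rw [← EuclideanDomain.gcd_isUnit_iff]
  set d := EuclideanDomain.gcd (f.reflect n) (g.reflect n) with hd
  have hdf : d ∣ f.reflect n := EuclideanDomain.gcd_dvd_left _ _
  have hdg : d ∣ g.reflect n := EuclideanDomain.gcd_dvd_right _ _
  have hf0 : (f.reflect n).coeff 0 = 1 := by
    rw [coeff_reflect, revAt_le (Nat.zero_le n), Nat.sub_zero, ← hfn]
    exact hf.coeff_natDegree
  have hd00 : d.coeff 0 ≠ 0 := by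
    intro h0
    have : X ∣ d := X_dvd_iff.mpr h0
    have : X ∣ f.reflect n := this.trans hdf
    rw [X_dvd_iff, hf0] at this
    exact one_ne_zero this
  have hefdvd : d.reflect d.natDegree ∣ f := by
    have := dvd_reflect n d (f.reflect n) hdf (natDegree_reflect_le (le_of_eq hfn))
    rwa [_root_.reflect_reflect] at this
  have hegdvd : d.reflect d.natDegree ∣ g := by
    have hgn : g.natDegree ≤ n := natDegree_le_iff_degree_le.mpr hg.le
    have := dvd_reflect n d (g.reflect n) hdg (natDegree_reflect_le hgn)
    rwa [_root_.reflect_reflect] at this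
  have hu : IsUnit (d.reflect d.natDegree) := hc.isUnit_of_dvd' hefdvd hegdvd
  have hdeg0 : (d.reflect d.natDegree).natDegree = 0 := natDegree_eq_zero_of_isUnit hu
  have hdcoeff : (d.reflect d.natDegree).coeff d.natDegree ≠ 0 := by
    rw [coeff_reflect, revAt_le le_rfl, Nat.sub_self]
    exact hd00
  have hddeg : d.natDegree = 0 := by
    by_contra hne
    exact hdcoeff (coeff_eq_zero_of_natDegree_lt (by omega))
  obtain ⟨c, hcd⟩ := Polynomial.natDegree_eq_zero.mp hddeg
  rw [← hcd]
  exact isUnit_C.mpr (isUnit_iff_ne_zero.mpr (by rintro rfl; simp [← hcd] at hd00))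

end Aux

/-- for `f` monic of degree `n` and `deg g < n` over a field `k`,
`res_{n,n}(f,g)` is invertible iff `(f,g) = k[X]` and `(f*,g*) = k[X]`, where the
reciprocals are taken with formal degree `n`. -/
theorem isUnit_res_iff_span {k : Type*} [Field k] (n : ℕ) (f g : Polynomial k)
    (hf : f.Monic) (hfn : f.natDegree = n) (hg : g.degree < (n : ℕ)) :
    IsUnit (res n n f g) ↔
      (Ideal.span {f, g} = ⊤ ∧ Ideal.span {f.reflect n, g.reflect n} = ⊤) := by
  rw [span_pair_top_iff, span_pair_top_iff, isUnit_res_iff_isCoprime n f g hf hfn hg]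
  constructor
  · intro h
    exact ⟨h, isCoprime_reflect n f g hf hfn hg h⟩
  · rintro ⟨h1, _⟩
    exact h1
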